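/- Let m be a positive integer, M > 0, and let μ be a probability measure on ℝ^m with μ{λ : λ_i ≤ 0 for some i} = 0 and μ{λ : ∏_{i=1}^m λ_i = M^m} = 0. Then lim_{P→∞} μ{ λ : ∑_{i=1}^m log(1 + (P/M)·λ_i) < m·log P } = μ{ λ : ∏_{i=1}^m λ_i < M^m }. -/

import Mathlib

open Filter Set MeasureTheory Topology

/-- At maximum multiplexing gain `r = m` with receiver-only CSI, the outage
probability converges to the constant `μ {λ | ∏ λᵢ < M^m}`. -/
theorem outage_probability_limit
    (m : ℕ) (hm : 0 < m) (M : ℝ) (hM : 0 < M)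
    (μ : Measure (Fin m → ℝ)) [IsProbabilityMeasure μ]
    (hpos : μ {lam | ∃ i, lam i ≤ 0} = 0)
    (hboundary : μ {lam | (∏ i, lam i) = M ^ m} = 0) :
    Tendsto
      (fun P : ℝ =>
        μ {lam | (∑ i, Real.log (1 + P / M * lam i)) < m * Real.log P})
      atTop (nhds (μ {lam | (∏ i, lam i) < M ^ m})) := by
  set G : Set (Fin m → ℝ) := {lam | ∀ i, 0 < lam i} with hGdef
  have hGc : μ Gᶜ = 0 := by
    convert hpos using 2
    ext lam
    simp [hGdef, not_forall, not_lt]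
  set C : ℝ → Set (Fin m → ℝ) :=
    fun P => {lam | (∀ i, 0 < lam i) ∧ ∏ i, (M / max P 1 + lam i) < M ^ m} with hCdef
  have hmax : ∀ P : ℝ, 0 < max P 1 := fun P => lt_of_lt_of_le one_pos (le_max_right _ _)
  have hmono : Monotone C := by
    intro P Q hPQ lam hlam
    obtain ⟨h1, h2⟩ := hlam
    refine ⟨h1, lt_of_le_of_lt ?_ h2⟩
    apply Finset.prod_le_prod
    · intro i _
      have := h1 i
      have := hmax Q
      positivity
    · intro i _
      have hPQ' : max P 1 ≤ max Q 1 := max_le_max hPQ le_rfl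
      gcongr
  -- eventual equality of measures
  have key : (fun P : ℝ =>
        μ {lam | (∑ i, Real.log (1 + P / M * lam i)) < m * Real.log P})
      =ᶠ[atTop] fun P => μ (C P) := by
    filter_upwards [eventually_ge_atTop (1 : ℝ)] with P hP
    have hP0 : (0 : ℝ) < P := lt_of_lt_of_le one_pos hP
    have hmaxP : max P 1 = P := max_eq_left hP
    rw [← measure_inter_conull hGc]
    congr 1
    ext lam
    simp only [mem_inter_iff, mem_setOf_eq, hCdef, hGdef, hmaxP]
    constructor
    · rintro ⟨hsum, h1⟩
      refine ⟨h1, ?_⟩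
      have hfac : ∀ i, 1 + P / M * lam i = P / M * (M / P + lam i) := by
        intro i; field_simp
      have hposfac : ∀ i, 0 < M / P + lam i := fun i => by
        have := h1 i; positivity
      have hpos1 : ∀ i, 0 < 1 + P / M * lam i := fun i => by
        rw [hfac i]; have := hposfac i; positivity
      have hlog : (∑ i, Real.log (1 + P / M * lam i))
          = Real.log (∏ i, (1 + P / M * lam i)) :=
        (Real.log_prod fun i _ => (hpos1 i).ne').symm
      have hlogP : (m : ℝ) * Real.log P = Real.log (P ^ m) := by rw [Real.log_pow]
      rw [hlog, hlogP, Real.log_lt_log_iff (Finset.prod_pos fun i _ => hpos1 i)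
        (pow_pos hP0 m)] at hsum
      have hprodeq : (∏ i, (1 + P / M * lam i))
          = (P / M) ^ m * ∏ i, (M / P + lam i) := by
        rw [Finset.prod_congr rfl fun i _ => hfac i, Finset.prod_mul_distrib,
          Finset.prod_const, Finset.card_univ, Fintype.card_fin]
      have hPm : P ^ m = (P / M) ^ m * M ^ m := by
        rw [div_pow, div_mul_cancel₀]
        exact pow_ne_zero _ hM.ne'
      rw [hprodeq, hPm] at hsum
      exact lt_of_mul_lt_mul_left hsum (pow_pos (div_pos hP0 hM) m).le
    · rintro ⟨h1, hprod⟩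
      refine ⟨?_, h1⟩
      have hfac : ∀ i, 1 + P / M * lam i = P / M * (M / P + lam i) := by
        intro i; field_simp
      have hposfac : ∀ i, 0 < M / P + lam i := fun i => by
        have := h1 i; positivity
      have hpos1 : ∀ i, 0 < 1 + P / M * lam i := fun i => by
        rw [hfac i]; have := hposfac i; positivity
      have hlog : (∑ i, Real.log (1 + P / M * lam i))
          = Real.log (∏ i, (1 + P / M * lam i)) :=
        (Real.log_prod fun i _ => (hpos1 i).ne').symm
      have hlogP : (m : ℝ) * Real.log P = Real.log (P ^ m) := by rw [Real.log_pow]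
      rw [hlog, hlogP, Real.log_lt_log_iff (Finset.prod_pos fun i _ => hpos1 i)
        (pow_pos hP0 m)]
      have hprodeq : (∏ i, (1 + P / M * lam i))
          = (P / M) ^ m * ∏ i, (M / P + lam i) := by
        rw [Finset.prod_congr rfl fun i _ => hfac i, Finset.prod_mul_distrib,
          Finset.prod_const, Finset.card_univ, Fintype.card_fin]
      have hPm : P ^ m = (P / M) ^ m * M ^ m := by
        rw [div_pow, div_mul_cancel₀]
        exact pow_ne_zero _ hM.ne'
      rw [hprodeq, hPm]
      exact mul_lt_mul_of_pos_left hprod (pow_pos (div_pos hP0 hM) m)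
  -- the monotone limit
  have hfm : Monotone fun P => μ (C P) := fun P Q h => measure_mono (hmono h)
  have hUnion : (⋃ n : ℕ, C (n : ℝ)) = G ∩ {lam | (∏ i, lam i) < M ^ m} := by
    ext lam
    simp only [mem_iUnion, hCdef, mem_setOf_eq, mem_inter_iff, hGdef]
    constructor
    · rintro ⟨n, h1, h2⟩
      refine ⟨h1, lt_of_le_of_lt ?_ h2⟩
      apply Finset.prod_le_prod
      · intro i _; exact (h1 i).le
      · intro i _
        have := hmax (n : ℝ)
        nlinarith [div_nonneg hM.le (hmax (n : ℝ)).le]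
    · rintro ⟨h1, h2⟩
      have htend0 : Tendsto (fun n : ℕ => M / max (n : ℝ) 1) atTop (𝓝 0) := by
        have h1' : Tendsto (fun n : ℕ => max (n : ℝ) 1) atTop atTop :=
          tendsto_atTop_mono (fun n => le_max_left _ _) tendsto_natCast_atTop_atTop
        have := h1'.inv_tendsto_atTop.const_mul M
        simpa [div_eq_mul_inv] using this
      have hprod : Tendsto (fun n : ℕ => ∏ i, (M / max (n : ℝ) 1 + lam i)) atTop
          (𝓝 (∏ i, lam i)) := by
        have := tendsto_finset_prod (Finset.univ : Finset (Fin m))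
          (fun i _ => (htend0.add (tendsto_const_nhds (x := lam i))))
        simpa using this
      obtain ⟨n, hn⟩ := (hprod.eventually_lt_const h2).exists
      exact ⟨n, h1, hn⟩
  have hsup : (⨆ P : ℝ, μ (C P)) = μ {lam | (∏ i, lam i) < M ^ m} := by
    have hstep1 : (⨆ P : ℝ, μ (C P)) = ⨆ n : ℕ, μ (C (n : ℝ)) := by
      apply le_antisymm
      · exact iSup_le fun P => le_iSup_of_le ⌈P⌉₊ (hfm (Nat.le_ceil P))
      · exact iSup_le fun n => le_iSup (fun P : ℝ => μ (C P)) (n : ℝ)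
    have hdir : Directed (· ⊆ ·) fun n : ℕ => C (n : ℝ) :=
      (hmono.comp Nat.mono_cast).directed_le
    rw [hstep1, ← Directed.measure_iUnion hdir, hUnion, inter_comm,
      measure_inter_conull hGc]
  have htend : Tendsto (fun P => μ (C P)) atTop
      (𝓝 (μ {lam | (∏ i, lam i) < M ^ m})) := by
    rw [← hsup]; exact tendsto_atTop_iSup hfm
  exact htend.congr' key.symm
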